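/- arXiv:2401.04310 — 3 statements merged into one kernel-verified Lean document; each statement's English description precedes it below -/
import Mathlib

section
/- Let (A_n) be a sequence of 2×2 complex matrices with det A_n = 1 for all n, and suppose that the operator norms ‖A_n‖ (with respect to the Hermitian norm on ℂ²) tend to infinity. Then there exist a strictly increasing sequence of indices (n_k) and a nonzero vector b ∈ ℂ² such that for all nonzero vectors x₁, x₂ ∈ ℂ², neither of which is a complex scalar multiple of b, the projective distance between A_{n_k}x₁ and A_{n_k}x₂ tends to 0; equivalently, |⟨A_{n_k}x₁, A_{n_k}x₂⟩| / (‖A_{n_k}x₁‖ · ‖A_{n_k}x₂‖) → 1 as k → ∞. -/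
open Filter Topology

/-- The continuous linear map on `ℂ²` (with the Hermitian norm) induced by a 2×2 complex
matrix; its norm `‖matCLM A‖` is the operator norm of `A`. -/
noncomputable def matCLM (A : Matrix (Fin 2) (Fin 2) ℂ) :
    EuclideanSpace ℂ (Fin 2) →L[ℂ] EuclideanSpace ℂ (Fin 2) :=
  Matrix.toEuclideanCLM (𝕜 := ℂ) A

namespace Stmt0Aux

abbrev E2 := EuclideanSpace ℂ (Fin 2)

/-- The determinant 2-form on ℂ². -/
def Dd (u w : E2) : ℂ := u 0 * w 1 - u 1 * w 0

lemma matCLM_apply (A : Matrix (Fin 2) (Fin 2) ℂ) (x : E2) (i : Fin 2) :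
    matCLM A x i = A i 0 * x 0 + A i 1 * x 1 := by
  show (A.mulVec x) i = _
  simp [Matrix.mulVec, dotProduct, Fin.sum_univ_two]

lemma inner_eq (u w : E2) :
    (inner ℂ u w : ℂ) = (starRingEnd ℂ) (u 0) * w 0 + (starRingEnd ℂ) (u 1) * w 1 := by
  simp [PiLp.inner_apply, Fin.sum_univ_two]
  ring

lemma norm_sq_eq (u : E2) : ‖u‖ ^ 2 = Complex.normSq (u 0) + Complex.normSq (u 1) := by
  rw [EuclideanSpace.norm_eq, Real.sq_sqrt (by positivity)]
  simp [Fin.sum_univ_two, Complex.sq_norm]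

lemma lagrange (u w : E2) :
    ‖Dd u w‖ ^ 2 + ‖(inner ℂ u w : ℂ)‖ ^ 2 = ‖u‖ ^ 2 * ‖w‖ ^ 2 := by
  rw [norm_sq_eq u, norm_sq_eq w, inner_eq]
  simp only [Dd, Complex.sq_norm]
  simp only [Complex.normSq_apply, Complex.mul_re, Complex.mul_im, Complex.sub_re,
    Complex.sub_im, Complex.add_re, Complex.add_im, Complex.conj_re, Complex.conj_im]
  ring

lemma Dd_le (u w : E2) : ‖Dd u w‖ ≤ ‖u‖ * ‖w‖ := by
  nlinarith [lagrange u w, norm_nonneg (Dd u w), norm_nonneg u, norm_nonneg w,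
    sq_nonneg (‖(inner ℂ u w : ℂ)‖), mul_nonneg (norm_nonneg u) (norm_nonneg w)]

lemma Dd_map (A : Matrix (Fin 2) (Fin 2) ℂ) (x y : E2) :
    Dd (matCLM A x) (matCLM A y) = A.det * Dd x y := by
  simp only [Dd, matCLM_apply, Matrix.det_fin_two]
  ring

lemma Dd_continuous (x : E2) : Continuous fun w : E2 => Dd x w := by
  have h0 : Continuous fun w : E2 => w 0 := (EuclideanSpace.proj (0 : Fin 2) : E2 →L[ℂ] ℂ).continuous
  have h1 : Continuous fun w : E2 => w 1 := (EuclideanSpace.proj (1 : Fin 2) : E2 →L[ℂ] ℂ).continuous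
  exact (continuous_const.mul h1).sub (continuous_const.mul h0)

lemma Dd_eq_zero (b x : E2) (hb : b ≠ 0) (h : Dd x b = 0) : ∃ c : ℂ, x = c • b := by
  have hb' : b 0 ≠ 0 ∨ b 1 ≠ 0 := by
    by_contra hcon
    push_neg at hcon
    apply hb
    ext i
    fin_cases i <;> simp [hcon.1, hcon.2]
  have hDd : x 0 * b 1 = x 1 * b 0 := by
    have h' : x 0 * b 1 - x 1 * b 0 = 0 := h
    linear_combination h'
  rcases hb' with h0 | h1
  · refine ⟨x 0 / b 0, ?_⟩
    ext i
    fin_cases i <;> simp only [PiLp.smul_apply, smul_eq_mul, Fin.zero_eta, Fin.mk_one]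
    · field_simp
    · field_simp
      linear_combination -hDd
  · refine ⟨x 1 / b 1, ?_⟩
    ext i
    fin_cases i <;> simp only [PiLp.smul_apply, smul_eq_mul, Fin.zero_eta, Fin.mk_one]
    · field_simp
      linear_combination hDd
    · field_simp

lemma coord_le_norm (x : E2) (i : Fin 2) : ‖x i‖ ≤ ‖x‖ := by
  have h := norm_sq_eq x
  have h0 : ‖x i‖ ^ 2 ≤ ‖x‖ ^ 2 := by
    rw [h]
    fin_cases i <;>
      simp [Complex.sq_norm] <;>
      [nlinarith [Complex.normSq_nonneg (x 1)]; nlinarith [Complex.normSq_nonneg (x 0)]]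
  nlinarith [norm_nonneg (x i), norm_nonneg x]

lemma entry_le (A : Matrix (Fin 2) (Fin 2) ℂ) (i j : Fin 2) : ‖A i j‖ ≤ ‖matCLM A‖ := by
  have h1 : matCLM A (EuclideanSpace.single j 1) i = A i j := by
    rw [matCLM_apply]
    fin_cases j <;> simp [EuclideanSpace.single_apply]
  calc ‖A i j‖ = ‖matCLM A (EuclideanSpace.single j 1) i‖ := by rw [h1]
    _ ≤ ‖matCLM A (EuclideanSpace.single j 1)‖ := coord_le_norm _ i
    _ ≤ ‖matCLM A‖ * ‖EuclideanSpace.single j (1:ℂ)‖ := (matCLM A).le_opNorm _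
    _ = ‖matCLM A‖ := by rw [EuclideanSpace.norm_single]; simp

lemma opnorm_le_sum (A : Matrix (Fin 2) (Fin 2) ℂ) :
    ‖matCLM A‖ ≤ ‖A 0 0‖ + ‖A 0 1‖ + ‖A 1 0‖ + ‖A 1 1‖ := by
  refine ContinuousLinearMap.opNorm_le_bound _ (by positivity) fun x => ?_
  have hc0 := coord_le_norm x 0
  have hc1 := coord_le_norm x 1
  have h0 : ‖matCLM A x 0‖ ≤ (‖A 0 0‖ + ‖A 0 1‖) * ‖x‖ := by
    rw [matCLM_apply]
    calc ‖A 0 0 * x 0 + A 0 1 * x 1‖ ≤ ‖A 0 0 * x 0‖ + ‖A 0 1 * x 1‖ := norm_add_le _ _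
      _ = ‖A 0 0‖ * ‖x 0‖ + ‖A 0 1‖ * ‖x 1‖ := by rw [norm_mul, norm_mul]
      _ ≤ (‖A 0 0‖ + ‖A 0 1‖) * ‖x‖ := by nlinarith [norm_nonneg (A 0 0), norm_nonneg (A 0 1)]
  have h1 : ‖matCLM A x 1‖ ≤ (‖A 1 0‖ + ‖A 1 1‖) * ‖x‖ := by
    rw [matCLM_apply]
    calc ‖A 1 0 * x 0 + A 1 1 * x 1‖ ≤ ‖A 1 0 * x 0‖ + ‖A 1 1 * x 1‖ := norm_add_le _ _
      _ = ‖A 1 0‖ * ‖x 0‖ + ‖A 1 1‖ * ‖x 1‖ := by rw [norm_mul, norm_mul]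
      _ ≤ (‖A 1 0‖ + ‖A 1 1‖) * ‖x‖ := by nlinarith [norm_nonneg (A 1 0), norm_nonneg (A 1 1)]
  have hsum : ‖matCLM A x‖ ≤ ‖matCLM A x 0‖ + ‖matCLM A x 1‖ := by
    rw [EuclideanSpace.norm_eq]
    have : Real.sqrt (∑ i, ‖matCLM A x i‖ ^ 2) ≤
        Real.sqrt ((‖matCLM A x 0‖ + ‖matCLM A x 1‖) ^ 2) := by
      apply Real.sqrt_le_sqrt
      rw [Fin.sum_univ_two]
      nlinarith [norm_nonneg (matCLM A x 0), norm_nonneg (matCLM A x 1)]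
    rwa [Real.sqrt_sq (by positivity)] at this
  calc ‖matCLM A x‖ ≤ ‖matCLM A x 0‖ + ‖matCLM A x 1‖ := hsum
    _ ≤ (‖A 0 0‖ + ‖A 0 1‖) * ‖x‖ + (‖A 1 0‖ + ‖A 1 1‖) * ‖x‖ := add_le_add h0 h1
    _ = (‖A 0 0‖ + ‖A 0 1‖ + ‖A 1 0‖ + ‖A 1 1‖) * ‖x‖ := by ring

end Stmt0Aux

open Stmt0Aux in
theorem stmt0 (A : ℕ → Matrix (Fin 2) (Fin 2) ℂ)
    (hdet : ∀ n, (A n).det = 1)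
    (hnorm : Tendsto (fun n => ‖matCLM (A n)‖) atTop atTop) :
    ∃ nk : ℕ → ℕ, StrictMono nk ∧
      ∃ b : EuclideanSpace ℂ (Fin 2), b ≠ 0 ∧
        ∀ x₁ x₂ : EuclideanSpace ℂ (Fin 2), x₁ ≠ 0 → x₂ ≠ 0 →
          (∀ c : ℂ, x₁ ≠ c • b) → (∀ c : ℂ, x₂ ≠ c • b) →
          Tendsto (fun k =>
              ‖(inner ℂ (matCLM (A (nk k)) x₁) (matCLM (A (nk k)) x₂) : ℂ)‖ /
                (‖matCLM (A (nk k)) x₁‖ * ‖matCLM (A (nk k)) x₂‖))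
            atTop (𝓝 1) := by
  classical
  set B : ℕ → (E2 →L[ℂ] E2) := fun n => matCLM ((A n).adjugate) with hB
  -- inverse relations
  have hBA : ∀ n (x : E2), B n (matCLM (A n) x) = x := by
    intro n x
    have h1 : (A n).adjugate * (A n) = 1 := by
      rw [Matrix.adjugate_mul, hdet n, one_smul]
    have h2 : B n * matCLM (A n) = 1 := by
      rw [hB]
      show matCLM ((A n).adjugate) * matCLM (A n) = 1
      rw [matCLM, matCLM, ← map_mul, h1, map_one]
    calc B n (matCLM (A n) x) = (B n * matCLM (A n)) x := rfl
      _ = x := by rw [h2]; rfl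
  have hAB : ∀ n (x : E2), matCLM (A n) (B n x) = x := by
    intro n x
    have h1 : (A n) * (A n).adjugate = 1 := by
      rw [Matrix.mul_adjugate, hdet n, one_smul]
    have h2 : matCLM (A n) * B n = 1 := by
      rw [hB]
      show matCLM (A n) * matCLM ((A n).adjugate) = 1
      rw [matCLM, matCLM, ← map_mul, h1, map_one]
    calc matCLM (A n) (B n x) = (matCLM (A n) * B n) x := rfl
      _ = x := by rw [h2]; rfl
  have hAne : ∀ n (x : E2), x ≠ 0 → matCLM (A n) x ≠ 0 := by
    intro n x hx hcon
    exact hx (by rw [← hBA n x, hcon, map_zero])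
  have hApos : ∀ n (x : E2), x ≠ 0 → 0 < ‖matCLM (A n) x‖ :=
    fun n x hx => norm_pos_iff.mpr (hAne n x hx)
  -- the adjugate norms blow up
  have hBge : ∀ n, ‖matCLM (A n)‖ / 4 ≤ ‖B n‖ := by
    intro n
    have hsum := opnorm_le_sum (A n)
    have e00 : ‖A n 0 0‖ ≤ ‖B n‖ := by
      have : (A n).adjugate 1 1 = A n 0 0 := by rw [Matrix.adjugate_fin_two]; simp
      simpa [this] using entry_le ((A n).adjugate) 1 1
    have e01 : ‖A n 0 1‖ ≤ ‖B n‖ := by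
      have : (A n).adjugate 0 1 = -(A n 0 1) := by rw [Matrix.adjugate_fin_two]; simp
      have h := entry_le ((A n).adjugate) 0 1
      rwa [this, norm_neg] at h
    have e10 : ‖A n 1 0‖ ≤ ‖B n‖ := by
      have : (A n).adjugate 1 0 = -(A n 1 0) := by rw [Matrix.adjugate_fin_two]; simp
      have h := entry_le ((A n).adjugate) 1 0
      rwa [this, norm_neg] at h
    have e11 : ‖A n 1 1‖ ≤ ‖B n‖ := by
      have : (A n).adjugate 0 0 = A n 1 1 := by rw [Matrix.adjugate_fin_two]; simp
      simpa [this] using entry_le ((A n).adjugate) 0 0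
    linarith
  have hBatTop : Tendsto (fun n => ‖B n‖) atTop atTop :=
    tendsto_atTop_mono hBge (hnorm.atTop_div_const (by norm_num))
  have hBpos : ∀ n, 0 < ‖B n‖ := by
    intro n
    rw [norm_pos_iff]
    intro hcon
    have h := hBA n (EuclideanSpace.single 0 1)
    rw [hcon] at h
    simp only [ContinuousLinearMap.zero_apply] at h
    have : ‖EuclideanSpace.single (0 : Fin 2) (1:ℂ)‖ = 1 := by
      rw [EuclideanSpace.norm_single]; simp
    rw [← h] at this
    simp at this
  -- pick near-maximizing vectors for B n
  have hex : ∀ n, ∃ w : E2, ‖w‖ < 1 ∧ ‖B n‖ / 2 < ‖B n w‖ :=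
    fun n => (B n).exists_lt_apply_of_lt_opNorm (half_lt_self (hBpos n))
  choose w hw1 hw2 using hex
  set u : ℕ → E2 := fun n => B n (w n) with hu
  have hupos : ∀ n, 0 < ‖u n‖ := fun n => lt_of_le_of_lt (by positivity) (hw2 n)
  set bb : ℕ → E2 := fun n => ((‖u n‖ : ℂ))⁻¹ • u n with hbb
  have hbnorm : ∀ n, ‖bb n‖ = 1 := by
    intro n
    rw [hbb]
    simp only [norm_smul, norm_inv, Complex.norm_real, Real.norm_eq_abs,
      abs_of_pos (hupos n)]
    exact inv_mul_cancel₀ (hupos n).ne'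
  have hAbb : ∀ n, ‖matCLM (A n) (bb n)‖ ≤ 2 / ‖B n‖ := by
    intro n
    have h1 : matCLM (A n) (bb n) = ((‖u n‖ : ℂ))⁻¹ • w n := by
      rw [hbb]
      simp only [map_smul]
      rw [hu]
      show _ • matCLM (A n) (B n (w n)) = _
      rw [hAB n (w n)]
    rw [h1, norm_smul, norm_inv, Complex.norm_real, Real.norm_eq_abs, abs_of_pos (hupos n)]
    have h2 : ‖u n‖⁻¹ ≤ (‖B n‖ / 2)⁻¹ := by
      apply inv_anti₀ (by linarith [hBpos n]) (le_of_lt (hw2 n))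
    calc ‖u n‖⁻¹ * ‖w n‖ ≤ ‖u n‖⁻¹ * 1 := by
          apply mul_le_mul_of_nonneg_left (le_of_lt (hw1 n)) (by positivity)
      _ = ‖u n‖⁻¹ := mul_one _
      _ ≤ (‖B n‖ / 2)⁻¹ := h2
      _ = 2 / ‖B n‖ := by rw [inv_div]
  -- extract convergent subsequence of bb on the unit sphere
  have hmem : ∀ n, bb n ∈ Metric.sphere (0 : E2) 1 := by
    intro n; rw [mem_sphere_zero_iff_norm]; exact hbnorm n
  obtain ⟨b, hbmem, φ, hφ, hconv⟩ := (isCompact_sphere (0 : E2) 1).tendsto_subseq hmem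
  have hbnorm1 : ‖b‖ = 1 := mem_sphere_zero_iff_norm.mp hbmem
  have hb0 : b ≠ 0 := by intro h; rw [h, norm_zero] at hbnorm1; norm_num at hbnorm1
  refine ⟨φ, hφ, b, hb0, ?_⟩
  -- the key divergence
  have hAbbφ : Tendsto (fun k => ‖matCLM (A (φ k)) (bb (φ k))‖) atTop (𝓝 0) := by
    apply squeeze_zero (fun k => norm_nonneg _) (fun k => hAbb (φ k))
    have h1 : Tendsto (fun k => ‖B (φ k)‖) atTop atTop := hBatTop.comp (hφ.tendsto_atTop)
    simpa [div_eq_mul_inv] using (h1.inv_tendsto_atTop.const_mul (2:ℝ))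
  have key : ∀ x : E2, x ≠ 0 → (∀ c : ℂ, x ≠ c • b) →
      Tendsto (fun k => ‖matCLM (A (φ k)) x‖) atTop atTop := by
    intro x hx hc
    have hδ : Dd x b ≠ 0 := by
      intro h
      obtain ⟨c, hc'⟩ := Dd_eq_zero b x hb0 h
      exact hc c hc'
    have hδpos : 0 < ‖Dd x b‖ := norm_pos_iff.mpr hδ
    have hcont : Tendsto (fun k => ‖Dd x (bb (φ k))‖) atTop (𝓝 ‖Dd x b‖) :=
      (((Dd_continuous x).tendsto b).comp hconv).norm
    have hlow : ∀ᶠ k in atTop, ‖Dd x b‖ / 2 < ‖Dd x (bb (φ k))‖ :=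
      hcont.eventually (eventually_gt_nhds (by linarith))
    have hbbne : ∀ k, 0 < ‖matCLM (A (φ k)) (bb (φ k))‖ := by
      intro k
      apply hApos
      intro h
      have := hbnorm (φ k)
      rw [h, norm_zero] at this
      norm_num at this
    have hineq : ∀ k, ‖Dd x (bb (φ k))‖ / ‖matCLM (A (φ k)) (bb (φ k))‖ ≤
        ‖matCLM (A (φ k)) x‖ := by
      intro k
      rw [div_le_iff₀ (hbbne k)]
      have h1 := Dd_le (matCLM (A (φ k)) x) (matCLM (A (φ k)) (bb (φ k)))
      rwa [Dd_map, hdet, one_mul] at h1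
    have hdiv : Tendsto (fun k => (‖Dd x b‖ / 2) / ‖matCLM (A (φ k)) (bb (φ k))‖)
        atTop atTop := by
      have h1 : Tendsto (fun k => ‖matCLM (A (φ k)) (bb (φ k))‖) atTop (𝓝[>] 0) := by
        rw [tendsto_nhdsWithin_iff]
        exact ⟨hAbbφ, Eventually.of_forall fun k => hbbne k⟩
      simpa [div_eq_mul_inv] using h1.inv_tendsto_nhdsGT_zero.const_mul_atTop (half_pos hδpos)
    apply tendsto_atTop_mono' atTop _ hdiv
    filter_upwards [hlow] with k hk
    calc (‖Dd x b‖ / 2) / ‖matCLM (A (φ k)) (bb (φ k))‖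
        ≤ ‖Dd x (bb (φ k))‖ / ‖matCLM (A (φ k)) (bb (φ k))‖ :=
          div_le_div_of_nonneg_right (le_of_lt hk) (hbbne k).le
      _ ≤ ‖matCLM (A (φ k)) x‖ := hineq k
  -- conclude
  intro x₁ x₂ hx₁ hx₂ hc₁ hc₂
  have h₁ := key x₁ hx₁ hc₁
  have h₂ := key x₂ hx₂ hc₂
  set c : ℝ := ‖Dd x₁ x₂‖ with hcdef
  have hprod : Tendsto (fun k => ‖matCLM (A (φ k)) x₁‖ * ‖matCLM (A (φ k)) x₂‖)
      atTop atTop := h₁.atTop_mul_atTop₀ h₂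
  have hfrac : Tendsto
      (fun k => c ^ 2 / (‖matCLM (A (φ k)) x₁‖ * ‖matCLM (A (φ k)) x₂‖) ^ 2)
      atTop (𝓝 0) :=
    tendsto_const_nhds.div_atTop (hprod.atTop_mul_atTop₀ hprod |>.congr fun k => (sq _).symm)
  have hsub : Tendsto
      (fun k => 1 - c ^ 2 / (‖matCLM (A (φ k)) x₁‖ * ‖matCLM (A (φ k)) x₂‖) ^ 2)
      atTop (𝓝 1) := by
    have h := (tendsto_const_nhds (x := (1:ℝ))).sub hfrac
    simpa using h
  have hsqrt : Tendsto
      (fun k => Real.sqrt (1 - c ^ 2 / (‖matCLM (A (φ k)) x₁‖ * ‖matCLM (A (φ k)) x₂‖) ^ 2))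
      atTop (𝓝 1) := by
    have h := (Real.continuous_sqrt.continuousAt (x := (1:ℝ))).tendsto.comp hsub
    simpa [Real.sqrt_one, Function.comp_def] using h
  have heq : ∀ k, ‖(inner ℂ (matCLM (A (φ k)) x₁) (matCLM (A (φ k)) x₂) : ℂ)‖ /
      (‖matCLM (A (φ k)) x₁‖ * ‖matCLM (A (φ k)) x₂‖) =
      Real.sqrt (1 - c ^ 2 / (‖matCLM (A (φ k)) x₁‖ * ‖matCLM (A (φ k)) x₂‖) ^ 2) := by
    intro k
    set N1 := ‖matCLM (A (φ k)) x₁‖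
    set N2 := ‖matCLM (A (φ k)) x₂‖
    have hN1 : 0 < N1 := hApos _ _ hx₁
    have hN2 : 0 < N2 := hApos _ _ hx₂
    have hlag := lagrange (matCLM (A (φ k)) x₁) (matCLM (A (φ k)) x₂)
    have hD : ‖Dd (matCLM (A (φ k)) x₁) (matCLM (A (φ k)) x₂)‖ = c := by
      rw [Dd_map, hdet, one_mul]
    have h2 : ‖(inner ℂ (matCLM (A (φ k)) x₁) (matCLM (A (φ k)) x₂) : ℂ)‖ ^ 2 =
        (N1 * N2) ^ 2 - c ^ 2 := by
      rw [← hD]; rw [mul_pow]; linarith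
    have e1 : 1 - c ^ 2 / (N1 * N2) ^ 2 =
        (‖(inner ℂ (matCLM (A (φ k)) x₁) (matCLM (A (φ k)) x₂) : ℂ)‖ / (N1 * N2)) ^ 2 := by
      rw [div_pow, h2]
      field_simp
    rw [e1, Real.sqrt_sq (by positivity)]
  exact hsqrt.congr fun k => (heq k).symm
end

section
/- Let (X, μ) be a finite measure space, let T : X → X be a measure-preserving transformation, and let (K_n)_{n ≥ 1} be a sequence of measurable subsets of X with ∑_{n=1}^{∞} μ(X \ K_n) < ∞. Then there is a measurable subset Ω ⊆ X with μ(X \ Ω) = 0 having the property that for any x, y ∈ Ω there exist n ∈ ℕ and a strictly increasing sequence (n_k) of natural numbers such that T^{n_k}(x) ∈ K_n and T^{n_k}(y) ∈ K_n for every k. -/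
open MeasureTheory Filter
open scoped ENNReal

namespace Stmt5Aux

set_option linter.unusedSectionVars false

variable {X : Type*} [MeasurableSpace X]

/-- Number of times `m < M` with `T^[m] x ∈ A`. -/
noncomputable def cnt (T : X → X) (A : Set X) (M : ℕ) (x : X) : ℕ :=
  ∑ m ∈ Finset.range M, A.indicator (fun _ => 1) (T^[m] x)

lemma cnt_eq_card (T : X → X) (A : Set X) (M : ℕ) (x : X)
    [DecidablePred fun m : ℕ => T^[m] x ∈ A] :
    cnt T A M x = ((Finset.range M).filter (fun m => T^[m] x ∈ A)).card := by
  unfold cnt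
  rw [Finset.card_filter]
  refine Finset.sum_congr rfl fun m _ => ?_
  by_cases h : T^[m] x ∈ A <;> simp [h]

/-- Birkhoff sum. -/
noncomputable def S (T : X → X) (f : X → ℝ) (M : ℕ) (x : X) : ℝ :=
  ∑ m ∈ Finset.range M, f (T^[m] x)

/-- Running maximum of Birkhoff sums `S k`, `0 ≤ k ≤ N`. -/
noncomputable def Phi (T : X → X) (f : X → ℝ) : ℕ → X → ℝ
  | 0 => fun _ => 0
  | (N + 1) => fun x => max (Phi T f N x) (S T f (N + 1) x)

lemma Phi_nonneg (T : X → X) (f : X → ℝ) : ∀ N x, 0 ≤ Phi T f N x := by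
  intro N
  induction N with
  | zero => intro x; simp [Phi]
  | succ N ih => intro x; exact le_trans (ih x) (le_max_left _ _)

lemma S_le_Phi (T : X → X) (f : X → ℝ) {k N : ℕ} (h : k ≤ N) (x : X) :
    S T f k x ≤ Phi T f N x := by
  induction N with
  | zero =>
    interval_cases k
    simp [S, Phi]
  | succ N ih =>
    rcases Nat.lt_or_ge k (N + 1) with h' | h'
    · exact le_trans (ih (Nat.lt_succ_iff.mp h')) (le_max_left _ _)
    · have : k = N + 1 := le_antisymm h h'
      subst this
      exact le_max_right _ _

lemma Phi_mono (T : X → X) (f : X → ℝ) {a b : ℕ} (hab : a ≤ b) (x : X) :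
    Phi T f a x ≤ Phi T f b x := by
  induction b with
  | zero => interval_cases a; exact le_refl _
  | succ b ih =>
    rcases Nat.lt_or_ge a (b + 1) with h' | h'
    · exact le_trans (ih (Nat.lt_succ_iff.mp h')) (le_max_left _ _)
    · have : a = b + 1 := le_antisymm hab h'
      subst this; exact le_refl _

lemma Phi_pos_exists (T : X → X) (f : X → ℝ) {N : ℕ} {x : X} (h : 0 < Phi T f N x) :
    ∃ k, 0 < k ∧ k ≤ N ∧ Phi T f N x = S T f k x := by
  induction N with
  | zero => simp [Phi] at h
  | succ N ih =>
    rcases le_total (S T f (N + 1) x) (Phi T f N x) with h' | h'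
    · have hm : Phi T f (N + 1) x = Phi T f N x := max_eq_left h'
      rw [hm] at h ⊢
      obtain ⟨k, hk0, hkN, hEq⟩ := ih h
      exact ⟨k, hk0, hkN.trans (Nat.le_succ N), hEq⟩
    · have hm : Phi T f (N + 1) x = S T f (N + 1) x := max_eq_right h'
      exact ⟨N + 1, Nat.succ_pos N, le_refl _, hm⟩

lemma S_succ (T : X → X) (f : X → ℝ) (k : ℕ) (x : X) :
    S T f (k + 1) x = f x + S T f k (T x) := by
  unfold S
  rw [Finset.sum_range_succ']
  simp only [Function.iterate_succ_apply, Function.iterate_zero_apply]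
  ring

lemma measurable_S {T : X → X} {f : X → ℝ} (hT : Measurable T) (hf : Measurable f) (M : ℕ) :
    Measurable (S T f M) := by
  unfold S
  exact Finset.measurable_sum _ fun m _ => hf.comp (hT.iterate m)

lemma measurable_Phi {T : X → X} {f : X → ℝ} (hT : Measurable T) (hf : Measurable f) (N : ℕ) :
    Measurable (Phi T f N) := by
  induction N with
  | zero => simpa [Phi] using measurable_const
  | succ N ih => exact Measurable.max ih (measurable_S hT hf (N + 1))

lemma Phi_le (T : X → X) {f : X → ℝ} (hf : ∀ y, f y ≤ 2) : ∀ N x, Phi T f N x ≤ 2 * N := by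
  have hS : ∀ k x, S T f k x ≤ 2 * k := by
    intro k x
    calc S T f k x ≤ ∑ _m ∈ Finset.range k, (2:ℝ) := Finset.sum_le_sum fun m _ => hf _
    _ = 2 * k := by simp [mul_comm]
  intro N
  induction N with
  | zero => intro x; simp [Phi]
  | succ N ih =>
    intro x
    refine max_le (le_trans (ih x) ?_) (by simpa using hS (N + 1) x)
    push_cast; linarith

/-- The "bad" set for a target set `A`: points for which some initial time interval spends
more than a third of its time in `A`. -/
def BadSet (T : X → X) (A : Set X) : Set X :=
  {x | ∃ M, M < 3 * cnt T A M x}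

lemma measurable_cnt {T : X → X} {A : Set X} (hT : Measurable T) (hA : MeasurableSet A) (M : ℕ) :
    Measurable (fun x => cnt T A M x) := by
  unfold cnt
  exact Finset.measurable_sum _ fun m _ =>
    ((measurable_const.indicator hA)).comp (hT.iterate m)

lemma measurableSet_BadSet {T : X → X} {A : Set X} (hT : Measurable T) (hA : MeasurableSet A) :
    MeasurableSet (BadSet T A) := by
  have : BadSet T A = ⋃ M : ℕ, (fun x => cnt T A M x) ⁻¹' {c | M < 3 * c} := by
    ext x; simp [BadSet]
  rw [this]
  exact MeasurableSet.iUnion fun M => (measurable_cnt hT hA M) (by trivial)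

/-- Maximal-ergodic-type inequality (Garsia's argument) for the bad set. -/
lemma measure_BadSet_le (μ : Measure X) [IsFiniteMeasure μ] {T : X → X}
    (hT : MeasurePreserving T μ μ) {A : Set X} (hA : MeasurableSet A) :
    μ (BadSet T A) ≤ 3 * μ A := by
  classical
  have hmT := hT.measurable
  set f : X → ℝ := fun x => if x ∈ A then 2 else -1 with hfdef
  have hfm : Measurable f := Measurable.ite hA measurable_const measurable_const
  have hf2 : ∀ y, f y ≤ 2 := by
    intro y; by_cases h : y ∈ A <;> simp [f, h] <;> norm_num
  have hfi : Integrable f μ := by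
    refine (integrable_const (2:ℝ)).mono' hfm.aestronglyMeasurable ?_
    filter_upwards with x
    by_cases h : x ∈ A <;> simp [f, h] <;> norm_num
  have hf3 : ∀ t, f t = 3 * (A.indicator (fun _ => (1:ℝ)) t) - 1 := by
    intro t; by_cases h : t ∈ A <;> simp [f, h] <;> norm_num
  -- relation between S and counting
  have hSc : ∀ M x, S T f M x = 3 * (cnt T A M x : ℝ) - M := by
    intro M x
    have h1 : ((cnt T A M x : ℕ) : ℝ)
        = ∑ m ∈ Finset.range M, A.indicator (fun _ => (1:ℝ)) (T^[m] x) := by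
      unfold cnt
      push_cast
      refine Finset.sum_congr rfl fun m _ => ?_
      by_cases h : T^[m] x ∈ A <;> simp [h]
    have h2 : (M:ℝ) = ∑ _m ∈ Finset.range M, (1:ℝ) := by simp
    unfold S
    rw [h1, h2, Finset.mul_sum, ← Finset.sum_sub_distrib]
    exact Finset.sum_congr rfl fun m _ => hf3 _
  -- BadSet as union of the sets where Phi is positive
  have hE : BadSet T A = ⋃ N, {x | 0 < Phi T f N x} := by
    ext x
    simp only [BadSet, Set.mem_setOf_eq, Set.mem_iUnion]
    constructor
    · rintro ⟨M, hM⟩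
      refine ⟨M, lt_of_lt_of_le ?_ (S_le_Phi T f le_rfl x)⟩
      rw [hSc]
      have : (M:ℝ) < 3 * ((cnt T A M x : ℕ) : ℝ) := by exact_mod_cast hM
      linarith
    · rintro ⟨N, hN⟩
      obtain ⟨k, hk0, _, hEq⟩ := Phi_pos_exists T f hN
      rw [hEq, hSc] at hN
      have : (k:ℝ) < 3 * ((cnt T A k x : ℕ) : ℝ) := by linarith
      exact ⟨k, by exact_mod_cast this⟩
  -- each level set has small measure
  have key : ∀ N, μ {x | 0 < Phi T f N x} ≤ 3 * μ A := by
    intro N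
    set Φ := Phi T f N with hΦdef
    have hΦm : Measurable Φ := measurable_Phi hmT hfm N
    have hΦnn : ∀ x, 0 ≤ Φ x := Phi_nonneg T f N
    have hΦbd : ∀ x, ‖Φ x‖ ≤ 2 * N := by
      intro x
      rw [Real.norm_eq_abs, abs_of_nonneg (hΦnn x)]
      exact Phi_le T hf2 N x
    have hΦi : Integrable Φ μ :=
      (integrable_const ((2:ℝ) * N)).mono' hΦm.aestronglyMeasurable
        (Eventually.of_forall hΦbd)
    set E := {x | 0 < Φ x} with hEdef
    have hEm : MeasurableSet E := measurableSet_lt measurable_const hΦm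
    have hΦTi : Integrable (fun x => Φ (T x)) μ :=
      (hT.integrable_comp hΦm.aestronglyMeasurable).mpr hΦi
    have hineq : ∀ x ∈ E, Φ x - Φ (T x) ≤ f x := by
      intro x hx
      obtain ⟨k, hk0, hkN, hEq⟩ := Phi_pos_exists T f hx
      obtain ⟨j, rfl⟩ : ∃ j, k = j + 1 := ⟨k - 1, (Nat.succ_pred_eq_of_pos hk0).symm⟩
      have h1 : S T f j (T x) ≤ Φ (T x) := S_le_Phi T f (le_trans (Nat.le_succ j) hkN) (T x)
      have hEq' : Φ x = S T f (j + 1) x := hEq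
      rw [hEq', S_succ]
      linarith
    have h1 : ∫ x in E, (Φ x - Φ (T x)) ∂μ ≤ ∫ x in E, f x ∂μ :=
      setIntegral_mono_on (hΦi.sub hΦTi).integrableOn hfi.integrableOn hEm hineq
    have h2 : ∫ x in E, Φ x ∂μ = ∫ x, Φ x ∂μ := by
      have hz : ∫ x in Eᶜ, Φ x ∂μ = 0 := by
        rw [setIntegral_congr_fun hEm.compl (g := fun _ => (0:ℝ))
          (fun x hx => le_antisymm (not_lt.mp hx) (hΦnn x))]
        simp
      rw [← integral_add_compl hEm hΦi, hz, add_zero]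
    have h3 : ∫ x in E, Φ (T x) ∂μ ≤ ∫ x, Φ (T x) ∂μ :=
      setIntegral_le_integral hΦTi (Eventually.of_forall fun x => hΦnn (T x))
    have h4 : ∫ x, Φ (T x) ∂μ = ∫ x, Φ x ∂μ := by
      conv_rhs => rw [← hT.map_eq]
      rw [integral_map hmT.aemeasurable hΦm.aestronglyMeasurable]
    have h5 : ∫ x in E, (Φ x - Φ (T x)) ∂μ
        = ∫ x in E, Φ x ∂μ - ∫ x in E, Φ (T x) ∂μ :=
      integral_sub hΦi.integrableOn hΦTi.integrableOn
    have hpos : 0 ≤ ∫ x in E, f x ∂μ := by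
      rw [h5] at h1
      linarith
    -- compute ∫_E f
    have hind : Integrable (A.indicator fun _ => (1:ℝ)) μ :=
      (integrable_const (1:ℝ)).indicator hA
    have hEf : ∫ x in E, f x ∂μ = 3 * (μ (E ∩ A)).toReal - (μ E).toReal := by
      rw [show f = fun x => 3 * A.indicator (fun _ => (1:ℝ)) x - 1 from funext hf3]
      rw [integral_sub ((hind.integrableOn).const_mul 3) (integrable_const (1:ℝ)).integrableOn]
      rw [integral_const_mul, setIntegral_indicator hA, setIntegral_const, setIntegral_const]
      simp [Measure.real]
    have hmono : (μ (E ∩ A)).toReal ≤ (μ A).toReal :=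
      (ENNReal.toReal_le_toReal (measure_ne_top _ _) (measure_ne_top _ _)).mpr
        (measure_mono Set.inter_subset_right)
    have hreal : (μ E).toReal ≤ 3 * (μ A).toReal := by
      rw [hEf] at hpos; linarith
    have h3top : (3:ℝ≥0∞) * μ A ≠ ⊤ :=
      ENNReal.mul_ne_top (by norm_num) (measure_ne_top _ _)
    refine (ENNReal.toReal_le_toReal (measure_ne_top _ _) h3top).mp ?_
    rw [ENNReal.toReal_mul]
    simpa using hreal
  -- conclude via monotone union
  have hmono : Monotone (fun N => {x : X | 0 < Phi T f N x}) := by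
    intro a b hab x hx
    exact lt_of_lt_of_le hx (Phi_mono T f hab x)
  rw [hE, (hmono.directed_le).measure_iUnion]
  exact iSup_le key

/-- Counting argument: if for both `x` and `y` the orbit spends at most a third of every
initial time interval outside `B`, then the set of common times in `B` is infinite. -/
lemma common_times_infinite {T : X → X} {B : Set X} {x y : X}
    (hx : ∀ M, 3 * cnt T Bᶜ M x ≤ M)
    (hy : ∀ M, 3 * cnt T Bᶜ M y ≤ M) :
    {m : ℕ | T^[m] x ∈ B ∧ T^[m] y ∈ B}.Infinite := by
  classical
  by_contra hinf
  rw [Set.not_infinite] at hinf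
  set c₀ := hinf.toFinset.card with hc₀
  set M := 3 * c₀ + 1 with hM
  simp only [cnt_eq_card] at hx hy
  have hsub : Finset.range M ⊆
      ((Finset.range M).filter (fun m => T^[m] x ∈ B ∧ T^[m] y ∈ B)) ∪
      (((Finset.range M).filter (fun m => T^[m] x ∈ Bᶜ)) ∪
       ((Finset.range M).filter (fun m => T^[m] y ∈ Bᶜ))) := by
    intro m hm
    by_cases h1 : T^[m] x ∈ B
    · by_cases h2 : T^[m] y ∈ B
      · exact Finset.mem_union_left _ (Finset.mem_filter.mpr ⟨hm, h1, h2⟩)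
      · exact Finset.mem_union_right _
          (Finset.mem_union_right _ (Finset.mem_filter.mpr ⟨hm, h2⟩))
    · exact Finset.mem_union_right _
        (Finset.mem_union_left _ (Finset.mem_filter.mpr ⟨hm, h1⟩))
  have hcard : M ≤ ((Finset.range M).filter (fun m => T^[m] x ∈ B ∧ T^[m] y ∈ B)).card
      + (((Finset.range M).filter (fun m => T^[m] x ∈ Bᶜ)).card
        + ((Finset.range M).filter (fun m => T^[m] y ∈ Bᶜ)).card) := by
    calc M = (Finset.range M).card := (Finset.card_range M).symm
    _ ≤ _ := Finset.card_le_card hsub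
    _ ≤ _ := le_trans (Finset.card_union_le _ _)
        (add_le_add le_rfl (Finset.card_union_le _ _))
  have hgood : ((Finset.range M).filter (fun m => T^[m] x ∈ B ∧ T^[m] y ∈ B)).card ≤ c₀ := by
    refine Finset.card_le_card fun m hm => ?_
    exact hinf.mem_toFinset.mpr (Finset.mem_filter.mp hm).2
  have h1 := hx M
  have h2 := hy M
  omega

end Stmt5Aux

open Stmt5Aux in
theorem stmt5 {X : Type*} [MeasurableSpace X] (μ : Measure X) [IsFiniteMeasure μ]
    (T : X → X) (hT : MeasurePreserving T μ μ)
    (K : ℕ → Set X) (hK : ∀ n, MeasurableSet (K n))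
    (hsum : ∑' n : ℕ, μ ((K n)ᶜ) < ⊤) :
    ∃ Ω : Set X, MeasurableSet Ω ∧ μ Ωᶜ = 0 ∧
      ∀ x ∈ Ω, ∀ y ∈ Ω, ∃ n : ℕ, ∃ nk : ℕ → ℕ, StrictMono nk ∧
        ∀ k, T^[nk k] x ∈ K n ∧ T^[nk k] y ∈ K n := by
  classical
  set Bad : ℕ → Set X := fun n => BadSet T ((K n)ᶜ) with hBaddef
  have hBadMeas : ∀ n, MeasurableSet (Bad n) :=
    fun n => measurableSet_BadSet hT.measurable (hK n).compl
  have hBadLe : ∀ n, μ (Bad n) ≤ 3 * μ ((K n)ᶜ) :=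
    fun n => measure_BadSet_le μ hT (hK n).compl
  set Ω : Set X := ⋃ N, ⋂ n, ⋂ (_ : N ≤ n), (Bad n)ᶜ with hΩdef
  refine ⟨Ω, ?_, ?_, ?_⟩
  · exact MeasurableSet.iUnion fun N =>
      MeasurableSet.iInter fun n => MeasurableSet.iInter fun _ => (hBadMeas n).compl
  · -- null complement, via tail sums
    have hsub : ∀ N, Ωᶜ ⊆ ⋃ k, Bad (k + N) := by
      intro N x hx
      simp only [hΩdef, Set.mem_compl_iff, Set.mem_iUnion, Set.mem_iInter, not_exists,
        not_forall] at hx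
      obtain ⟨n, hn, hmem⟩ := hx N
      rw [not_not] at hmem
      exact Set.mem_iUnion.mpr ⟨n - N, by rwa [Nat.sub_add_cancel hn]⟩
    have hbound : ∀ N, μ Ωᶜ ≤ ∑' k, 3 * μ ((K (k + N))ᶜ) := by
      intro N
      refine (measure_mono (hsub N)).trans ((measure_iUnion_le _).trans ?_)
      exact ENNReal.tsum_le_tsum fun k => hBadLe _
    have hne : ∑' n, (3:ℝ≥0∞) * μ ((K n)ᶜ) ≠ ⊤ := by
      rw [ENNReal.tsum_mul_left]
      exact ENNReal.mul_ne_top (by norm_num) hsum.ne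
    have htend := ENNReal.tendsto_sum_nat_add (fun n => (3:ℝ≥0∞) * μ ((K n)ᶜ)) hne
    have : μ Ωᶜ ≤ 0 := ge_of_tendsto' htend hbound
    exact le_antisymm this (by positivity)
  · -- the recurrence property
    intro x hx y hy
    simp only [hΩdef, Set.mem_iUnion, Set.mem_iInter] at hx hy
    obtain ⟨Nx, hNx⟩ := hx
    obtain ⟨Ny, hNy⟩ := hy
    set n := max Nx Ny with hn
    have hxB : x ∉ Bad n := hNx n (le_max_left _ _)
    have hyB : y ∉ Bad n := hNy n (le_max_right _ _)
    have hxC : ∀ M, 3 * cnt T ((K n)ᶜ) M x ≤ M := by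
      intro M
      by_contra h
      exact hxB ⟨M, by omega⟩
    have hyC : ∀ M, 3 * cnt T ((K n)ᶜ) M y ≤ M := by
      intro M
      by_contra h
      exact hyB ⟨M, by omega⟩
    have hinf : {m : ℕ | T^[m] x ∈ K n ∧ T^[m] y ∈ K n}.Infinite := by
      have := common_times_infinite (B := K n) (T := T) (x := x) (y := y) ?_ ?_
      · exact this
      · simpa using hxC
      · simpa using hyC
    exact ⟨n, Nat.nth (fun m => T^[m] x ∈ K n ∧ T^[m] y ∈ K n),
      Nat.nth_strictMono hinf, fun k => Nat.nth_mem_of_infinite hinf k⟩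
end

section
/- Let 𝔤 be a real Lie algebra admitting a basis e₁, …, e₆ whose only nonvanishing Lie brackets among basis vectors are [e₁, e₂] = e₅ = −[e₂, e₁] and [e₃, e₄] = e₅ = −[e₄, e₃] (all other brackets of basis vectors vanish). Let J : 𝔤 → 𝔤 be the linear endomorphism determined by J e₁ = e₂, J e₂ = −e₁, J e₃ = e₄, J e₄ = −e₃, J e₅ = e₆, J e₆ = −e₅. Then J ∘ J = −id, and the Nijenhuis tensor N_J(X, Y) := [X, Y] + J[JX, Y] + J[X, JY] − [JX, JY] vanishes for all X, Y ∈ 𝔤. -/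
theorem stmt6 {𝔤 : Type*} [LieRing 𝔤] [LieAlgebra ℝ 𝔤]
    (b : Module.Basis (Fin 6) ℝ 𝔤)
    (hbr : ∀ i j : Fin 6, ⁅b i, b j⁆ =
      if (i, j) = ((0 : Fin 6), (1 : Fin 6)) ∨ (i, j) = ((2 : Fin 6), (3 : Fin 6)) then b 4
      else if (i, j) = ((1 : Fin 6), (0 : Fin 6)) ∨ (i, j) = ((3 : Fin 6), (2 : Fin 6)) then -b 4
      else 0)
    (J : 𝔤 →ₗ[ℝ] 𝔤)
    (hJ0 : J (b 0) = b 1) (hJ1 : J (b 1) = -b 0)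
    (hJ2 : J (b 2) = b 3) (hJ3 : J (b 3) = -b 2)
    (hJ4 : J (b 4) = b 5) (hJ5 : J (b 5) = -b 4) :
    (∀ x : 𝔤, J (J x) = -x) ∧
      ∀ X Y : 𝔤, ⁅X, Y⁆ + J ⁅J X, Y⁆ + J ⁅X, J Y⁆ - ⁅J X, J Y⁆ = 0 := by
  constructor
  · have h : J.comp J = -LinearMap.id := by
      apply b.ext
      intro i
      fin_cases i <;>
        simp [hJ0, hJ1, hJ2, hJ3, hJ4, hJ5]
    intro x
    have := LinearMap.congr_fun h x
    simpa using this
  · let N : 𝔤 →ₗ[ℝ] 𝔤 →ₗ[ℝ] 𝔤 := LinearMap.mk₂ ℝ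
      (fun X Y => ⁅X, Y⁆ + J ⁅J X, Y⁆ + J ⁅X, J Y⁆ - ⁅J X, J Y⁆)
      (by intro m₁ m₂ n; simp [add_lie]; abel)
      (by intro c m n; simp [smul_lie, smul_add, smul_sub])
      (by intro m n₁ n₂; simp [lie_add]; abel)
      (by intro c m n; simp [lie_smul, smul_add, smul_sub])
    have hN : N = 0 := by
      apply b.ext
      intro i
      apply b.ext
      intro j
      fin_cases i <;> fin_cases j <;>
        simp [N, hbr, hJ0, hJ1, hJ2, hJ3, hJ4, hJ5]
    intro X Y
    have := LinearMap.congr_fun (LinearMap.congr_fun hN X) Y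
    simpa [N] using this
end
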